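/- arXiv:2602.02209 — 2 statements merged into one kernel-verified Lean document; each statement's English description precedes it below -/
import Mathlib

section
/- Let n ≥ 1, ρ = (n−1, n−2, …, 1, 0) ∈ ℤ^n, and let L = ℤ[x₁^{±1},…,x_n^{±1}, q^{±1}] be the Laurent polynomial ring (the group algebra of ℤ^n × ℤ with basis the monomials x^ν q^i). Define the bullet action of S_n on L ℤ-linearly by w • (x^ν q^i) = x^{w·ν} q^{i + (w·ν − ν)·ρ}, where (w·ν)_j = ν_{w⁻¹(j)}. Then: (a) each w• is a ring automorphism of L and this defines a group action of S_n; (b) for λ ∈ ℤ^n non-increasing (dominant), set sym_λ(q) = Σ_{μ ∈ S_n·λ} q^{(μ − λ₋)·ρ} x^μ, where λ₋ is the non-decreasing rearrangement of λ; the invariant ring L^{S_n•} is the free ℤ[q^{±1}]-module with basis {sym_λ(q) : λ non-increasing}; (c) moreover L^{S_n•} ∩ ℤ[x₁^{±1},…,x_n^{±1}][q] = ⊕_λ ℤ[q]·sym_λ(q). -/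
/-- The Laurent polynomial ring `L = ℤ[x₁^{±1},…,x_n^{±1}, q^{±1}]`, realized as the group
algebra of `ℤ^n × ℤ`: the monomial `x^ν q^i` is `Finsupp.single (ν, i) 1`. -/
abbrev Lring (n : ℕ) := AddMonoidAlgebra ℤ ((Fin n → ℤ) × ℤ)

/-- `ρ = (n-1, n-2, ..., 1, 0) ∈ ℤ^n`. -/
def rhoVec (n : ℕ) : Fin n → ℤ := fun i => (n : ℤ) - 1 - (i : ℕ)

/-- The dot product `μ · ρ`. -/
def dotRho {n : ℕ} (μ : Fin n → ℤ) : ℤ := ∑ i, μ i * rhoVec n i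

/-- The map on monomial exponents underlying the bullet action:
`(ν, i) ↦ (w·ν, i + (w·ν - ν)·ρ)` where `(w·ν)_j = ν_{w⁻¹(j)}`. -/
def bulletDom {n : ℕ} (w : Equiv.Perm (Fin n)) (p : (Fin n → ℤ) × ℤ) : (Fin n → ℤ) × ℤ :=
  ((fun j => p.1 (w⁻¹ j)), p.2 + dotRho ((fun j => p.1 (w⁻¹ j)) - p.1))

/-- The bullet action of `w ∈ S_n` on `L`, defined ℤ-linearly by
`w • (x^ν q^i) = x^{w·ν} q^{i + (w·ν - ν)·ρ}`. -/
noncomputable def bulletAct {n : ℕ} (w : Equiv.Perm (Fin n)) : Lring n →ₗ[ℤ] Lring n :=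
  AddMonoidAlgebra.mapDomainLinearMap ℤ ℤ (bulletDom w)

/-- The invariant ring `L^{S_n•}`, as a ℤ-submodule of `L`. -/
noncomputable def bulletInv (n : ℕ) : Submodule ℤ (Lring n) where
  carrier := {f | ∀ w : Equiv.Perm (Fin n), bulletAct w f = f}
  add_mem' := fun ha hb w => by rw [map_add, ha w, hb w]
  zero_mem' := fun w => map_zero _
  smul_mem' := fun c f hf w => by rw [map_smul, hf w]

/-- The unique non-decreasing rearrangement `λ₋` of `λ`. -/
def antidom {n : ℕ} (l : Fin n → ℤ) : Fin n → ℤ := l ∘ (Tuple.sort l)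

/-- `sym_λ(q) = Σ_{μ ∈ S_n·λ} q^{(μ - λ₋)·ρ} x^μ`. -/
noncomputable def symq {n : ℕ} (l : Fin n → ℤ) : Lring n :=
  ∑ μ ∈ Finset.image (fun σ : Equiv.Perm (Fin n) => (fun j => l (σ j))) Finset.univ,
    AddMonoidAlgebra.single (μ, dotRho (μ - antidom l)) 1

/-- The polynomial part `ℤ[x₁^{±1},…,x_n^{±1}][q] ⊆ L`: the span of the monomials `x^ν q^i`
with `i ≥ 0`. -/
noncomputable def polyPart (n : ℕ) : Submodule ℤ (Lring n) :=
  Submodule.span ℤ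
    {m : Lring n | ∃ (ν : Fin n → ℤ) (i : ℕ), m = AddMonoidAlgebra.single (ν, (i : ℤ)) 1}

section Aux
variable {n : ℕ}

lemma dotRho_sub (a b : Fin n → ℤ) : dotRho (a - b) = dotRho a - dotRho b := by
  simp [dotRho, sub_mul, Finset.sum_sub_distrib]

lemma dotRho_zero : dotRho (0 : Fin n → ℤ) = 0 := by simp [dotRho]

lemma bulletDom_add (w : Equiv.Perm (Fin n)) (p q : (Fin n → ℤ) × ℤ) :
    bulletDom w (p + q) = bulletDom w p + bulletDom w q := by
  unfold bulletDom
  refine Prod.ext (funext fun j => rfl) ?_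
  have h1 : ((fun j => (p + q).1 (w⁻¹ j)) - (p + q).1)
      = ((fun j => p.1 (w⁻¹ j)) - p.1) + ((fun j => q.1 (w⁻¹ j)) - q.1) := by
    funext j; simp [Prod.fst_add]; ring
  have h2 : ∀ a b : Fin n → ℤ, dotRho (a + b) = dotRho a + dotRho b := by
    intro a b; simp [dotRho, add_mul, Finset.sum_add_distrib]
  simp only [Prod.snd_add, h1, h2]
  ring

lemma bulletDom_one (p : (Fin n → ℤ) × ℤ) : bulletDom (1 : Equiv.Perm (Fin n)) p = p := by
  unfold bulletDom
  refine Prod.ext (funext fun j => rfl) ?_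
  have : ((fun j => p.1 ((1 : Equiv.Perm (Fin n))⁻¹ j)) - p.1) = 0 := by
    funext j; simp
  simp [this, dotRho_zero]

lemma bulletDom_comp (w w' : Equiv.Perm (Fin n)) (p : (Fin n → ℤ) × ℤ) :
    bulletDom (w * w') p = bulletDom w (bulletDom w' p) := by
  unfold bulletDom
  refine Prod.ext (funext fun j => by simp [mul_inv_rev, Equiv.Perm.mul_apply]) ?_
  simp only [mul_inv_rev, Equiv.Perm.mul_apply, dotRho_sub]
  ring

lemma bulletDom_leftinv (w : Equiv.Perm (Fin n)) (p : (Fin n → ℤ) × ℤ) :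
    bulletDom w⁻¹ (bulletDom w p) = p := by
  rw [← bulletDom_comp, inv_mul_cancel, bulletDom_one]

def bulletEquiv (w : Equiv.Perm (Fin n)) : ((Fin n → ℤ) × ℤ) ≃ ((Fin n → ℤ) × ℤ) where
  toFun := bulletDom w
  invFun := bulletDom w⁻¹
  left_inv := bulletDom_leftinv w
  right_inv := fun p => by conv_lhs => rw [← inv_inv w]; exact bulletDom_leftinv w⁻¹ p

def bulletDomHom (w : Equiv.Perm (Fin n)) : ((Fin n → ℤ) × ℤ) →+ ((Fin n → ℤ) × ℤ) :=
  AddMonoidHom.mk' (bulletDom w) (bulletDom_add w)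

lemma bulletAct_def (w : Equiv.Perm (Fin n)) (f : Lring n) :
    bulletAct w f = AddMonoidAlgebra.mapDomain (bulletDom w) f := rfl

lemma bulletAct_mul (w : Equiv.Perm (Fin n)) (f g : Lring n) :
    bulletAct w (f * g) = bulletAct w f * bulletAct w g := by
  simp only [bulletAct_def]
  exact AddMonoidAlgebra.mapDomain_mul (bulletDomHom w) f g

lemma bulletAct_one (w : Equiv.Perm (Fin n)) : bulletAct w (1 : Lring n) = 1 := by
  simp only [bulletAct_def]
  exact AddMonoidAlgebra.mapDomain_one (bulletDomHom w)

lemma bulletAct_id (f : Lring n) : bulletAct (1 : Equiv.Perm (Fin n)) f = f := by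
  simp only [bulletAct_def]
  rw [show bulletDom (1 : Equiv.Perm (Fin n)) = id from funext (bulletDom_one)]
  apply AddMonoidAlgebra.ext; exact Finsupp.mapDomain_id

lemma bulletAct_comp (w w' : Equiv.Perm (Fin n)) (f : Lring n) :
    bulletAct (w * w') f = bulletAct w (bulletAct w' f) := by
  simp only [bulletAct_def]
  rw [show bulletDom (w * w') = bulletDom w ∘ bulletDom w' from funext (bulletDom_comp w w')]
  apply AddMonoidAlgebra.ext; exact Finsupp.mapDomain_comp

lemma bulletAct_bijective (w : Equiv.Perm (Fin n)) :
    Function.Bijective (bulletAct (n := n) w) := by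
  refine Function.bijective_iff_has_inverse.mpr ⟨bulletAct w⁻¹, fun f => ?_, fun f => ?_⟩
  · rw [← bulletAct_comp, inv_mul_cancel, bulletAct_id]
  · rw [← bulletAct_comp, mul_inv_cancel, bulletAct_id]

lemma bulletAct_apply (w : Equiv.Perm (Fin n)) (f : Lring n) (p : (Fin n → ℤ) × ℤ) :
    (bulletAct w f).coeff p = f.coeff (bulletDom w⁻¹ p) := by
  rw [bulletAct_def, show bulletDom w = ⇑(bulletEquiv w) from rfl]
  change (Finsupp.mapDomain (bulletEquiv w) f.coeff) p = _
  rw [Finsupp.mapDomain_equiv_apply]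
  rfl

end Aux

section Aux2
variable {n : ℕ}

lemma antidom_comp_perm (l : Fin n → ℤ) (σ : Equiv.Perm (Fin n)) :
    antidom (l ∘ σ) = antidom l :=
  Tuple.comp_perm_comp_sort_eq_comp_sort

lemma monotone_antidom (l : Fin n → ℤ) : Monotone (antidom l) := Tuple.monotone_sort l

/-- The antitone rearrangement. -/
def domin {n : ℕ} (l : Fin n → ℤ) : Fin n → ℤ := antidom l ∘ Fin.rev

lemma antitone_domin (l : Fin n → ℤ) : Antitone (domin l) := by
  intro i j h
  exact monotone_antidom l (Fin.rev_le_rev.mpr h)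

lemma antidom_eq_comp_rev {l : Fin n → ℤ} (hl : Antitone l) :
    antidom l = l ∘ Fin.rev := by
  have h : Monotone (l ∘ (Fin.revPerm : Equiv.Perm (Fin n))) := by
    intro i j hij
    exact hl (by simpa using Fin.rev_le_rev.mpr hij)
  have := Tuple.comp_sort_eq_comp_iff_monotone.mpr h
  exact this.symm

lemma domin_eq_self {l : Fin n → ℤ} (hl : Antitone l) : domin l = l := by
  funext i
  simp [domin, antidom_eq_comp_rev hl, Fin.rev_rev]

lemma eq_antidom_comp (ν : Fin n → ℤ) : ν = antidom ν ∘ ⇑(Tuple.sort ν)⁻¹ := by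
  funext j
  simp only [antidom, Function.comp_apply, Equiv.Perm.inv_def, Equiv.apply_symm_apply]

lemma domin_comp_perm (l : Fin n → ℤ) (σ : Equiv.Perm (Fin n)) :
    domin (l ∘ σ) = domin l := by
  unfold domin; rw [antidom_comp_perm]

lemma antidom_antidom (ν : Fin n → ℤ) : antidom (antidom ν) = antidom ν := by
  conv_lhs => rw [show antidom ν = ν ∘ (Tuple.sort ν : Equiv.Perm (Fin n)) from rfl]
  rw [antidom_comp_perm]

lemma domin_antidom (ν : Fin n → ℤ) : domin (antidom ν) = domin ν := by
  conv_lhs => rw [show antidom ν = ν ∘ (Tuple.sort ν : Equiv.Perm (Fin n)) from rfl]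
  rw [domin_comp_perm]

lemma exists_perm_eq_domin_comp (ν : Fin n → ℤ) : ∃ σ : Equiv.Perm (Fin n), ν = domin ν ∘ σ := by
  refine ⟨(Tuple.sort ν)⁻¹.trans Fin.revPerm, ?_⟩
  funext j
  have := congrFun (eq_antidom_comp ν) j
  simp only [domin, Function.comp_apply, Equiv.trans_apply, Fin.revPerm_apply, Fin.rev_rev]
  exact this

lemma antidom_eq_of_perm {μ l : Fin n → ℤ} (σ : Equiv.Perm (Fin n))
    (h : μ = fun j => l (σ j)) : antidom μ = antidom l := by
  rw [h]; exact antidom_comp_perm l σ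

/-- orbit membership characterization -/
lemma mem_orb_iff {l : Fin n → ℤ} (hl : Antitone l) (μ : Fin n → ℤ) :
    (μ ∈ Finset.image (fun σ : Equiv.Perm (Fin n) => (fun j => l (σ j))) Finset.univ)
      ↔ domin μ = l := by
  constructor
  · rintro hμ
    rw [Finset.mem_image] at hμ
    obtain ⟨σ, -, rfl⟩ := hμ
    rw [show (fun j => l (σ j)) = l ∘ σ from rfl, domin_comp_perm, domin_eq_self hl]
  · intro h
    obtain ⟨σ, hσ⟩ := exists_perm_eq_domin_comp μ
    rw [Finset.mem_image]
    refine ⟨σ, Finset.mem_univ _, ?_⟩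
    rw [← h]
    funext j
    exact (congrFun hσ j).symm

lemma dotRho_antidom_le (ν : Fin n → ℤ) : dotRho (antidom ν) ≤ dotRho ν := by
  have hanti : Antivary (antidom ν) (rhoVec n) := by
    intro i j hij
    refine monotone_antidom ν ?_
    unfold rhoVec at hij
    have hj : ((j : ℕ) : ℤ) < ((i : ℕ) : ℤ) := by omega
    exact Fin.le_def.mpr (by exact_mod_cast hj.le)
  have := hanti.sum_smul_le_sum_comp_perm_smul (σ := (Tuple.sort ν)⁻¹)
  simp only [smul_eq_mul] at this
  calc dotRho (antidom ν) = ∑ i, antidom ν i * rhoVec n i := rfl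
    _ ≤ ∑ i, antidom ν ((Tuple.sort ν)⁻¹ i) * rhoVec n i := this
    _ = dotRho ν := by
        unfold dotRho
        refine Finset.sum_congr rfl fun i _ => ?_
        have := (congrFun (eq_antidom_comp ν) i).symm
        simp only [Function.comp_apply] at this
        rw [this]

end Aux2

section Aux3
variable {n : ℕ}

/-- orbit of `l` -/
noncomputable def orb (l : Fin n → ℤ) : Finset (Fin n → ℤ) :=
  Finset.image (fun σ : Equiv.Perm (Fin n) => (fun j => l (σ j))) Finset.univ

lemma antidom_of_mem_orb {l μ : Fin n → ℤ} (h : μ ∈ orb l) : antidom μ = antidom l := by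
  rw [orb, Finset.mem_image] at h
  obtain ⟨σ, -, rfl⟩ := h
  exact antidom_comp_perm l σ

/-- the orbit invariant `κ` -/
def kap (p : (Fin n → ℤ) × ℤ) : (Fin n → ℤ) × ℤ :=
  (domin p.1, p.2 - dotRho (p.1 - antidom p.1))

lemma kap_bulletDom (w : Equiv.Perm (Fin n)) (p : (Fin n → ℤ) × ℤ) :
    kap (bulletDom w p) = kap p := by
  unfold kap bulletDom
  have h1 : (fun j => p.1 (w⁻¹ j)) = p.1 ∘ ⇑w⁻¹ := rfl
  refine Prod.ext ?_ ?_
  · simp only [h1, domin_comp_perm]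
  · simp only [h1, antidom_comp_perm, dotRho_sub]
    ring

/-- the family `q^i · sym_λ(q)` -/
noncomputable def efam (l : Fin n → ℤ) (i : ℤ) : Lring n :=
  (AddMonoidAlgebra.single ((0 : Fin n → ℤ), i) (1 : ℤ)) * symq l

lemma efam_eq_sum (l : Fin n → ℤ) (i : ℤ) :
    efam l i = ∑ μ ∈ orb l, AddMonoidAlgebra.single (μ, i + dotRho (μ - antidom l)) (1 : ℤ) := by
  unfold efam symq orb
  rw [Finset.mul_sum]
  refine Finset.sum_congr rfl fun μ _ => ?_
  rw [AddMonoidAlgebra.single_mul_single, one_mul]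
  congr 1
  simp [Prod.add_def]

/-- key coefficient formula -/
lemma efam_apply {l : Fin n → ℤ} (hl : Antitone l) (i : ℤ) (p : (Fin n → ℤ) × ℤ) :
    (efam l i).coeff p = if kap p = (l, i) then 1 else 0 := by
  rw [efam_eq_sum, AddMonoidAlgebra.coeff_sum, Finsupp.finset_sum_apply]
  simp only [AddMonoidAlgebra.coeff_single]
  by_cases h : kap p = (l, i)
  · have h1 : domin p.1 = l := congrArg Prod.fst h
    have hmem : p.1 ∈ orb l := (mem_orb_iff hl p.1).mpr h1
    have h2 : p.2 = i + dotRho (p.1 - antidom l) := by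
      have := congrArg Prod.snd h
      simp only [kap] at this
      rw [← antidom_of_mem_orb hmem]
      omega
    rw [if_pos h, Finset.sum_eq_single_of_mem p.1 hmem]
    · rw [show ((p.1, i + dotRho (p.1 - antidom l)) : (Fin n → ℤ) × ℤ) = p from
        (Prod.ext rfl h2.symm), Finsupp.single_apply, if_pos rfl]
    · intro μ hμ hne
      rw [Finsupp.single_apply, if_neg]
      intro hc
      exact hne (congrArg Prod.fst hc)
  · rw [if_neg h]
    refine Finset.sum_eq_zero fun μ hμ => ?_
    rw [Finsupp.single_apply, if_neg]
    intro hc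
    apply h
    have hp1 : p.1 = μ := (congrArg Prod.fst hc).symm
    have hp2 : p.2 = i + dotRho (μ - antidom l) := (congrArg Prod.snd hc).symm
    have hd : domin p.1 = l := by rw [hp1]; exact (mem_orb_iff hl μ).mp hμ
    have ha : antidom p.1 = antidom l := by rw [hp1]; exact antidom_of_mem_orb hμ
    refine Prod.ext hd ?_
    simp only [kap]
    rw [ha, hp1]
    omega

lemma kap_rep {l : Fin n → ℤ} (hl : Antitone l) (i : ℤ) :
    kap ((antidom l, i) : (Fin n → ℤ) × ℤ) = (l, i) := by
  unfold kap
  refine Prod.ext ?_ ?_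
  · simp only
    rw [domin_antidom, domin_eq_self hl]
  · simp only
    rw [antidom_antidom, sub_self, dotRho_zero, sub_zero]

lemma exists_bulletDom_rep (p : (Fin n → ℤ) × ℤ) :
    ∃ w : Equiv.Perm (Fin n),
      bulletDom w ((antidom p.1, p.2 - dotRho (p.1 - antidom p.1)) : (Fin n → ℤ) × ℤ) = p := by
  refine ⟨Tuple.sort p.1, ?_⟩
  unfold bulletDom
  have h1 : (fun j => antidom p.1 ((Tuple.sort p.1)⁻¹ j)) = p.1 := by
    funext j
    simp only [antidom, Function.comp_apply, Equiv.Perm.inv_def, Equiv.apply_symm_apply]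
  refine Prod.ext h1 ?_
  simp only [h1]
  ring

lemma invariant_apply_eq {f : Lring n} (hf : ∀ w : Equiv.Perm (Fin n), bulletAct w f = f)
    (p : (Fin n → ℤ) × ℤ) :
    f.coeff p = f.coeff ((antidom p.1, p.2 - dotRho (p.1 - antidom p.1)) : (Fin n → ℤ) × ℤ) := by
  obtain ⟨w, hw⟩ := exists_bulletDom_rep p
  conv_lhs => rw [← hw, ← hf w, bulletAct_def]
  exact Finsupp.mapDomain_apply (f := bulletDom w) (bulletEquiv w).injective f.coeff _

/-- reconstruction of an invariant element -/
lemma invariant_repr {f : Lring n} (hf : ∀ w : Equiv.Perm (Fin n), bulletAct w f = f) :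
    f = ∑ k ∈ f.coeff.support.image kap, f.coeff ((antidom k.1, k.2) : (Fin n → ℤ) × ℤ) • efam k.1 k.2 := by
  ext p
  rw [AddMonoidAlgebra.coeff_sum, Finsupp.finset_sum_apply]
  have hterm : ∀ k ∈ f.coeff.support.image kap,
      (f.coeff ((antidom k.1, k.2) : (Fin n → ℤ) × ℤ) • efam k.1 k.2).coeff p
        = if kap p = k then f.coeff ((antidom k.1, k.2) : (Fin n → ℤ) × ℤ) else 0 := by
    intro k hk
    rw [Finset.mem_image] at hk
    obtain ⟨q, -, rfl⟩ := hk
    have hanti : Antitone (kap q).1 := antitone_domin q.1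
    rw [AddMonoidAlgebra.coeff_smul, Finsupp.smul_apply, efam_apply hanti, smul_eq_mul]
    by_cases hc : kap p = kap q
    · rw [if_pos (by rw [hc]), if_pos hc, mul_one]
    · rw [if_neg (fun hcc => hc (by rw [← Prod.mk.eta (p := kap q)]; exact hcc)), if_neg hc,
        mul_zero]
  rw [Finset.sum_congr rfl hterm, Finset.sum_ite_eq (f.coeff.support.image kap) (kap p)]
  by_cases hmem : kap p ∈ f.coeff.support.image kap
  · rw [if_pos hmem]
    have : f.coeff p = f.coeff ((antidom (kap p).1, (kap p).2) : (Fin n → ℤ) × ℤ) := by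
      have h2 := invariant_apply_eq hf p
      have ha : antidom (kap p).1 = antidom p.1 := by
        unfold kap
        simp only
        rw [show domin p.1 = antidom p.1 ∘ Fin.rev from rfl,
          show antidom p.1 ∘ Fin.rev = antidom p.1 ∘ ⇑(Fin.revPerm : Equiv.Perm (Fin n)) from rfl,
          antidom_comp_perm, antidom_antidom]
      rw [ha]
      exact h2
    exact this
  · rw [if_neg hmem]
    by_contra hne
    exact hmem (Finset.mem_image_of_mem kap (Finsupp.mem_support_iff.mpr fun h0 => hne (by rw [h0])))

lemma efam_invariant {l : Fin n → ℤ} (hl : Antitone l) (i : ℤ) :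
    ∀ w : Equiv.Perm (Fin n), bulletAct w (efam l i) = efam l i := by
  intro w
  ext p
  rw [bulletAct_apply, efam_apply hl, efam_apply hl, kap_bulletDom]

end Aux3

section Aux4
variable {n : ℕ}

lemma mem_polyPart_iff (f : Lring n) :
    f ∈ polyPart n ↔ ∀ p ∈ f.coeff.support, (0 : ℤ) ≤ p.2 := by
  constructor
  · intro hf
    let M : Submodule ℤ (Lring n) :=
      { carrier := {g : Lring n | ∀ p ∈ g.coeff.support, (0 : ℤ) ≤ p.2}
        add_mem' := fun {a b} ha hb p hp => by
          rw [AddMonoidAlgebra.coeff_add] at hp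
          rcases Finset.mem_union.mp (Finsupp.support_add hp) with h | h
          exacts [ha p h, hb p h]
        zero_mem' := by simp
        smul_mem' := fun c g hg p hp => hg p (Finsupp.support_smul (by rwa [AddMonoidAlgebra.coeff_smul] at hp)) }
    have hle : polyPart n ≤ M := by
      rw [polyPart, Submodule.span_le]
      rintro m ⟨ν, i, rfl⟩
      intro p hp
      have := Finsupp.support_single_subset hp
      rw [Finset.mem_singleton] at this
      rw [this]
      exact Int.ofNat_nonneg i
    exact hle hf
  · intro hsupp
    rw [← AddMonoidAlgebra.sum_coeff_single f]
    refine Submodule.sum_mem _ fun p hp => ?_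
    have h2 := hsupp p hp
    have : AddMonoidAlgebra.single p (f.coeff p) = (f.coeff p) • AddMonoidAlgebra.single p (1 : ℤ) := by
      rw [AddMonoidAlgebra.smul_single' (f.coeff p) p 1, mul_one]
    rw [this]
    refine Submodule.smul_mem _ _ (Submodule.subset_span ⟨p.1, p.2.toNat, ?_⟩)
    rw [Int.toNat_of_nonneg h2]

lemma efam_mem_polyPart {l : Fin n → ℤ} (i : ℕ) :
    efam l (i : ℤ) ∈ polyPart n := by
  rw [efam_eq_sum]
  refine Submodule.sum_mem _ fun μ hμ => ?_
  have hd : (0 : ℤ) ≤ dotRho (μ - antidom l) := by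
    rw [← antidom_of_mem_orb hμ, dotRho_sub, sub_nonneg]
    exact dotRho_antidom_le μ
  refine Submodule.subset_span ⟨μ, ((i : ℤ) + dotRho (μ - antidom l)).toNat, ?_⟩
  rw [Int.toNat_of_nonneg (by omega)]

end Aux4

theorem stmt9 (n : ℕ) (hn : 1 ≤ n) :
    -- (a) each `w•` is a ring automorphism, and this is a group action of `S_n`
    ((∀ w : Equiv.Perm (Fin n), ∀ f g : Lring n,
        bulletAct w (f * g) = bulletAct w f * bulletAct w g) ∧
      (∀ w : Equiv.Perm (Fin n), bulletAct w (1 : Lring n) = 1) ∧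
      (∀ w : Equiv.Perm (Fin n), Function.Bijective (bulletAct (n := n) w)) ∧
      (∀ f : Lring n, bulletAct (1 : Equiv.Perm (Fin n)) f = f) ∧
      (∀ w w' : Equiv.Perm (Fin n), ∀ f : Lring n,
        bulletAct (w * w') f = bulletAct w (bulletAct w' f))) ∧
    -- (b) `L^{S_n•}` is the free `ℤ[q^{±1}]`-module with basis the `sym_λ(q)`, `λ` dominant:
    -- the monomial multiples `q^i · sym_λ(q)` form a ℤ-basis of the invariants
    (LinearIndependent ℤ (fun p : {l : Fin n → ℤ // Antitone l} × ℤ =>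
        (AddMonoidAlgebra.single ((0 : Fin n → ℤ), p.2) (1 : ℤ)) * symq p.1.1) ∧
      Submodule.span ℤ (Set.range fun p : {l : Fin n → ℤ // Antitone l} × ℤ =>
        (AddMonoidAlgebra.single ((0 : Fin n → ℤ), p.2) (1 : ℤ)) * symq p.1.1) = bulletInv n) ∧
    -- (c) `L^{S_n•} ∩ ℤ[x^{±1}][q] = ⊕_λ ℤ[q]·sym_λ(q)`
    Submodule.span ℤ (Set.range fun p : {l : Fin n → ℤ // Antitone l} × ℕ =>
        (AddMonoidAlgebra.single ((0 : Fin n → ℤ), (p.2 : ℤ)) (1 : ℤ)) * symq p.1.1) =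
      bulletInv n ⊓ polyPart n := by
  refine ⟨⟨bulletAct_mul, bulletAct_one, bulletAct_bijective, bulletAct_id, bulletAct_comp⟩,
    ⟨?_, ?_⟩, ?_⟩
  · -- linear independence
    rw [linearIndependent_iff']
    intro s g hsum k hk
    replace hsum : ∑ k' ∈ s, g k' • efam k'.1.1 k'.2 = 0 := hsum
    have h0 := congrArg (fun F : Lring n => F.coeff ((antidom k.1.1, k.2) : (Fin n → ℤ) × ℤ)) hsum
    simp only [AddMonoidAlgebra.coeff_zero, Finsupp.coe_zero, Pi.zero_apply] at h0
    rw [AddMonoidAlgebra.coeff_sum, Finsupp.finset_sum_apply] at h0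
    have hterm : ∀ k' ∈ s, (g k' • efam k'.1.1 k'.2).coeff ((antidom k.1.1, k.2) : (Fin n → ℤ) × ℤ)
        = if k' = k then g k' else 0 := by
      intro k' _
      rw [AddMonoidAlgebra.coeff_smul, Finsupp.smul_apply, efam_apply k'.1.2, smul_eq_mul]
      by_cases hc : k' = k
      · subst hc
        rw [if_pos rfl, if_pos (kap_rep k'.1.2 k'.2), mul_one]
      · rw [if_neg hc, if_neg ?_, mul_zero]
        intro hcc
        rw [kap_rep k.1.2 k.2] at hcc
        apply hc
        exact Prod.ext (Subtype.ext (congrArg Prod.fst hcc).symm) (congrArg Prod.snd hcc).symm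
    rw [Finset.sum_congr rfl hterm, Finset.sum_ite_eq' s k g, if_pos hk] at h0
    exact h0
  · -- span = invariants
    refine le_antisymm ?_ ?_
    · rw [Submodule.span_le]
      rintro m ⟨p, rfl⟩
      exact fun w => efam_invariant p.1.2 p.2 w
    · intro f hf
      have hf' : ∀ w : Equiv.Perm (Fin n), bulletAct w f = f := hf
      rw [invariant_repr hf']
      refine Submodule.sum_mem _ fun k hk => ?_
      rw [Finset.mem_image] at hk
      obtain ⟨q, -, rfl⟩ := hk
      exact Submodule.smul_mem _ _
        (Submodule.subset_span ⟨((⟨(kap q).1, antitone_domin q.1⟩ : {l : Fin n → ℤ // Antitone l}),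
          (kap q).2), rfl⟩)
  · -- part (c)
    refine le_antisymm ?_ ?_
    · rw [Submodule.span_le]
      rintro m ⟨p, rfl⟩
      refine Submodule.mem_inf.mpr ⟨fun w => efam_invariant p.1.2 (p.2 : ℤ) w,
        efam_mem_polyPart p.2⟩
    · intro f hf
      obtain ⟨hinv, hpoly⟩ := Submodule.mem_inf.mp hf
      have hinv' : ∀ w : Equiv.Perm (Fin n), bulletAct w f = f := hinv
      rw [invariant_repr hinv']
      refine Submodule.sum_mem _ fun k hk => ?_
      rw [Finset.mem_image] at hk
      obtain ⟨q, -, rfl⟩ := hk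
      by_cases hc : f.coeff ((antidom (kap q).1, (kap q).2) : (Fin n → ℤ) × ℤ) = 0
      · rw [hc, zero_smul]; exact Submodule.zero_mem _
      · have hmem : ((antidom (kap q).1, (kap q).2) : (Fin n → ℤ) × ℤ) ∈ f.coeff.support :=
          Finsupp.mem_support_iff.mpr hc
        have hk2 : (0 : ℤ) ≤ (kap q).2 := (mem_polyPart_iff f).mp hpoly ((antidom (kap q).1, (kap q).2) : (Fin n → ℤ) × ℤ) hmem
        refine Submodule.smul_mem _ _ (Submodule.subset_span
          ⟨((⟨(kap q).1, antitone_domin q.1⟩ : {l : Fin n → ℤ // Antitone l}), (kap q).2.toNat),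
            ?_⟩)
        show efam (kap q).1 (((kap q).2.toNat : ℕ) : ℤ) = efam (kap q).1 (kap q).2
        rw [Int.toNat_of_nonneg hk2]
end

section
/- Fix a composition n = n₁ + … + n_r with consecutive blocks B₁,…,B_r, let W(L) be the group of rigid block permutations preserving block sizes, ρ = (n−1,…,1,0), and dot action ν•μ = ν·(μ+ρ) − ρ on ℤ^n. Let cox_L ∈ S_n be the permutation acting on each block B_i as the full cycle sending the j-th element of B_i to the (j+1)-st cyclically. Let k be a field, q > 1 an integer, t ≥ 1 a common multiple of n₁,…,n_r (so cox_L^t = 1), and ζ ∈ k^× of order q^t − 1. With φ(x)_j = (x_{cox_L(j)})^q and λ(ζ) = (ζ^{λ₁},…,ζ^{λ_n}), define s(λ) = ∏_{i=0}^{t−1} φ^i(λ(ζ)) ∈ (k^×)^n. Then the map μ ↦ s(μ+ρ) intertwines the dot action of W(L) on ℤ^n with the natural permutation action of W(L) on (k^×)^n: for all ν ∈ W(L) and μ ∈ ℤ^n, s((ν•μ)+ρ) = ν·s(μ+ρ). -/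
/-! A composition `n = n₁ + … + n_r` with consecutive blocks `B₁,…,B_r` is encoded by a
monotone surjective map `b : Fin n → Fin r`: the block `B_i` is the fiber `b⁻¹(i)`. -/

/-- The size `n_i` of the block `B_i`. -/
def blockSize {n r : ℕ} (b : Fin n → Fin r) (i : Fin r) : ℕ :=
  (Finset.univ.filter fun x => b x = i).card

/-- The start of the block `B_i`. -/
def blockStart {n r : ℕ} (b : Fin n → Fin r) (i : Fin r) : ℕ :=
  (Finset.univ.filter fun x => b x < i).card

/-- The position of `x` inside its block. -/
def blockPos {n r : ℕ} (b : Fin n → Fin r) (x : Fin n) : ℕ := (x : ℕ) - blockStart b (b x)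

/-- `w ∈ W(L)`: `w` is a rigid block permutation preserving block sizes. -/
def IsRigidBlockPerm {n r : ℕ} (b : Fin n → Fin r) (w : Equiv.Perm (Fin n)) : Prop :=
  ∃ τ : Equiv.Perm (Fin r), (∀ i, blockSize b (τ i) = blockSize b i) ∧
    ∀ x, b (w x) = τ (b x) ∧ blockPos b (w x) = blockPos b x

/-- The natural permutation action of `S_n` on `ℤ^n`: `(w·μ)_j = μ_{w⁻¹(j)}`. -/
def permAct {n : ℕ} (w : Equiv.Perm (Fin n)) (μ : Fin n → ℤ) : Fin n → ℤ :=
  fun j => μ (w⁻¹ j)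

/-- The dot action `w • μ = w·(μ + ρ) - ρ`. -/
def dotAct {n : ℕ} (w : Equiv.Perm (Fin n)) (μ : Fin n → ℤ) : Fin n → ℤ :=
  permAct w (μ + rhoVec n) - rhoVec n

/-- Jantzen's element `s(λ) = ∏_{i=0}^{t-1} φ^i(λ(ζ)) ∈ (k^×)^n`, where
`φ(x)_j = (x_{c(j)})^q` and `λ(ζ) = (ζ^{λ₁},…,ζ^{λ_n})`. -/
def jS {n : ℕ} {k : Type*} [Field k] (q t : ℕ) (c : Equiv.Perm (Fin n)) (ζ : kˣ)
    (l : Fin n → ℤ) : Fin n → kˣ :=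
  ∏ i ∈ Finset.range t,
    (fun x : Fin n → kˣ => fun j => (x (c j)) ^ q)^[i] (fun j => ζ ^ (l j))

lemma blockStart_le {n r : ℕ} (b : Fin n → Fin r) (hb : Monotone b) (x : Fin n) :
    blockStart b (b x) ≤ (x : ℕ) := by
  unfold blockStart
  calc (Finset.univ.filter fun y => b y < b x).card
      ≤ (Finset.univ.filter fun y : Fin n => y < x).card := by
        apply Finset.card_le_card
        intro y hy
        simp only [Finset.mem_filter, Finset.mem_univ, true_and] at *
        by_contra h
        exact absurd (hb (not_lt.mp h)) (not_le.mpr hy)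
    _ = (x : ℕ) := by
        have : (Finset.univ.filter fun y : Fin n => y < x) = Finset.Iio x := by
          ext y; simp
        rw [this, Fin.card_Iio]

lemma blockInj {n r : ℕ} (b : Fin n → Fin r) (hb : Monotone b) {x y : Fin n}
    (h1 : b x = b y) (h2 : blockPos b x = blockPos b y) : x = y := by
  have hx := blockStart_le b hb x
  have hy := blockStart_le b hb y
  unfold blockPos at h2
  rw [h1] at h2 hx
  apply Fin.ext
  omega

lemma jS_iter_eq {n : ℕ} {k : Type*} [Field k] (q : ℕ) (c : Equiv.Perm (Fin n))
    (g : Fin n → kˣ) (i : ℕ) :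
    (fun x : Fin n → kˣ => fun j => (x (c j)) ^ q)^[i] g
      = fun j => (g ((c ^ i) j)) ^ q ^ i := by
  induction i with
  | zero => simp
  | succ i ih =>
    rw [Function.iterate_succ_apply', ih]
    funext j
    simp only [pow_succ, Equiv.Perm.mul_apply, ← pow_mul]

/-- The map `μ ↦ s(μ+ρ)` intertwines the dot action of `W(L)` on `ℤ^n` with the natural
permutation action of `W(L)` on `(k^×)^n`. -/
theorem stmt17 {k : Type*} [Field k] (n r q t : ℕ) (hq : 1 < q) (ht : 1 ≤ t)
    (b : Fin n → Fin r) (hb : Monotone b) (hbs : Function.Surjective b)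
    (hdvd : ∀ i : Fin r, blockSize b i ∣ t)
    (c : Equiv.Perm (Fin n))
    (hc : ∀ x, b (c x) = b x ∧ blockPos b (c x) = (blockPos b x + 1) % blockSize b (b x))
    (ζ : kˣ) (hζ : orderOf ζ = q ^ t - 1)
    (w : Equiv.Perm (Fin n)) (hw : IsRigidBlockPerm b w) (μ : Fin n → ℤ) :
    jS q t c ζ (dotAct w μ + rhoVec n) = fun j => jS q t c ζ (μ + rhoVec n) (w⁻¹ j) := by
  obtain ⟨τ, hsz, hτ⟩ := hw
  have hcomm : Commute c w := by
    show c * w = w * c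
    apply Equiv.ext
    intro x
    show c (w x) = w (c x)
    apply blockInj b hb
    · rw [(hc (w x)).1, (hτ x).1, (hτ (c x)).1, (hc x).1]
    · rw [(hc (w x)).2, (hτ x).2, (hτ (c x)).2, (hc x).2, (hτ x).1, hsz]
  have hl : dotAct w μ + rhoVec n = permAct w (μ + rhoVec n) := by
    funext x
    simp [dotAct]
  rw [hl]
  set l := μ + rhoVec n with hldef
  funext j
  unfold jS
  rw [Finset.prod_apply, Finset.prod_apply]
  apply Finset.prod_congr rfl
  intro i _
  rw [jS_iter_eq, jS_iter_eq]
  have hci : c ^ i * w⁻¹ = w⁻¹ * c ^ i := (hcomm.pow_left i).inv_right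
  have : (c ^ i) (w⁻¹ j) = w⁻¹ ((c ^ i) j) := by
    calc (c ^ i) (w⁻¹ j) = (c ^ i * w⁻¹) j := rfl
      _ = (w⁻¹ * c ^ i) j := by rw [hci]
      _ = w⁻¹ ((c ^ i) j) := rfl
  simp only [permAct, this]
end
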